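/- With M_n := (1 − l_n)^{−1} for nonzero integers n, the first and second discrete differences of the sequence (M_n) satisfy: sup |n|·|M_{n+1} − M_n| < ∞, where the supremum is over all integers n with n ≠ 0 and n+1 ≠ 0, and sup |n|²·|M_{n+2} − 2·M_{n+1} + M_n| < ∞, where the supremum is over all integers n with n, n+1, n+2 all nonzero. -/

import Mathlib

open Complex Filter

/-- `Θ_i = α_i + i·β_i`. -/
noncomputable def Thi (αi βi : ℝ) : ℂ := (αi : ℂ) + (βi : ℂ) * Complex.I

/-- `Θ_o = α_o + i·β_o`. -/
noncomputable def Tho (αo βo : ℝ) : ℂ := (αo : ℂ) + (βo : ℂ) * Complex.I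

/-- The multiplier `l_n` of equation (36A):
`l_n = (1 − R^{2n})·|Θ_i|² / ((sign(n)·α_i − i·β_i)·(Θ_o + R^{2n}·Θ̄_o))`. -/
noncomputable def lseq (αi αo βi βo R : ℝ) (n : ℤ) : ℂ :=
  (((1 - R ^ (2 * n)) * ‖(Thi αi βi)‖ ^ 2 : ℝ) : ℂ) /
    (((n.sign : ℂ) * (αi : ℂ) - (βi : ℂ) * Complex.I) *
      (Tho αo βo + ((R ^ (2 * n) : ℝ) : ℂ) * (starRingEnd ℂ) (Tho αo βo)))

lemma T2_ne (αo βo : ℝ) (hαo : 0 < αo) {x : ℝ} (hx0 : 0 < x) :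
    Tho αo βo + (x : ℂ) * (starRingEnd ℂ) (Tho αo βo) ≠ 0 := by
  intro h
  have : (Tho αo βo + (x : ℂ) * (starRingEnd ℂ) (Tho αo βo)).re = αo * (1 + x) := by
    simp [Tho]; ring
  rw [h] at this
  simp only [Complex.zero_re] at this
  nlinarith

lemma F_ne (αi αo βi βo : ℝ) (hαi : 0 < αi) (hαo : 0 < αo) {x : ℝ} (hx1 : 1 ≤ x) :
    (Tho αo βo - Thi αi βi) + (x : ℂ) * ((starRingEnd ℂ) (Tho αo βo) + Thi αi βi) ≠ 0 := by
  intro h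
  have : ((Tho αo βo - Thi αi βi) + (x : ℂ) * ((starRingEnd ℂ) (Tho αo βo) + Thi αi βi)).re
      = αo * (1 + x) + αi * (x - 1) := by
    simp [Tho, Thi]; ring
  rw [h] at this
  simp only [Complex.zero_re] at this
  nlinarith

lemma G_ne (αi αo βi βo : ℝ) (hαi : 0 < αi) (hαo : 0 < αo) {x : ℝ} (hx0 : 0 < x)
    (hx1 : x ≤ 1) :
    (Tho αo βo + (starRingEnd ℂ) (Thi αi βi)) +
      (x : ℂ) * ((starRingEnd ℂ) (Tho αo βo) - (starRingEnd ℂ) (Thi αi βi)) ≠ 0 := by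
  intro h
  have : ((Tho αo βo + (starRingEnd ℂ) (Thi αi βi)) +
      (x : ℂ) * ((starRingEnd ℂ) (Tho αo βo) - (starRingEnd ℂ) (Thi αi βi))).re
      = αo * (1 + x) + αi * (1 - x) := by
    simp [Tho, Thi]; ring
  rw [h] at this
  simp only [Complex.zero_re] at this
  nlinarith

lemma habs' (αi βi : ℝ) :
    ((‖Thi αi βi‖)^2 : ℂ) = Thi αi βi * (starRingEnd ℂ) (Thi αi βi) := by
  rw [Complex.mul_conj]; norm_cast; exact Complex.sq_norm _

lemma Minv_pos (αi αo βi βo R : ℝ) (hαi : 0 < αi) (hαo : 0 < αo) (hβi : 0 ≤ βi)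
    (hR : 2 ≤ R) {n : ℤ} (hn : 1 ≤ n) :
    (1 - lseq αi αo βi βo R n)⁻¹ =
      (Tho αo βo + ((R ^ (2*n) : ℝ) : ℂ) * (starRingEnd ℂ) (Tho αo βo)) /
      ((Tho αo βo - Thi αi βi) +
        ((R ^ (2*n) : ℝ) : ℂ) * ((starRingEnd ℂ) (Tho αo βo) + Thi αi βi)) := by
  have hR0 : (0:ℝ) < R := lt_of_lt_of_le two_pos hR
  have hx0 : (0:ℝ) < R ^ (2*n) := zpow_pos hR0 _
  have hx1 : (1:ℝ) ≤ R ^ (2*n) := one_le_zpow₀ (le_trans one_le_two hR) (by omega)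
  have hsign : n.sign = 1 := Int.sign_eq_one_iff_pos.mpr (by omega)
  have hSconj : (starRingEnd ℂ) (Thi αi βi) ≠ 0 := by
    simp [Thi, Complex.ext_iff]
    intro h; exact absurd h (ne_of_gt hαi)
  have hT2 := T2_ne αo βo hαo hx0
  have hF := F_ne αi αo βi βo hαi hαo hx1
  have key : (1 : ℂ) - lseq αi αo βi βo R n =
      ((Tho αo βo - Thi αi βi) +
        ((R ^ (2*n) : ℝ) : ℂ) * ((starRingEnd ℂ) (Tho αo βo) + Thi αi βi)) /
      (Tho αo βo + ((R ^ (2*n) : ℝ) : ℂ) * (starRingEnd ℂ) (Tho αo βo)) := by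
    rw [lseq, hsign]
    have hc1 : ((1:ℤ) : ℂ) * (αi : ℂ) - (βi : ℂ) * Complex.I = (starRingEnd ℂ) (Thi αi βi) := by
      simp [Thi, Complex.ext_iff]
    rw [hc1, Complex.ofReal_mul, Complex.ofReal_sub, Complex.ofReal_one,
      Complex.ofReal_pow, habs']
    generalize hg : ((R ^ (2*n) : ℝ) : ℂ) = X at *
    field_simp
    ring
  rw [key, inv_div]

lemma Minv_neg (αi αo βi βo R : ℝ) (hαi : 0 < αi) (hαo : 0 < αo) (hβi : 0 ≤ βi)
    (hR : 2 ≤ R) {n : ℤ} (hn : n ≤ -1) :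
    (1 - lseq αi αo βi βo R n)⁻¹ =
      (Tho αo βo + ((R ^ (2*n) : ℝ) : ℂ) * (starRingEnd ℂ) (Tho αo βo)) /
      ((Tho αo βo + (starRingEnd ℂ) (Thi αi βi)) +
        ((R ^ (2*n) : ℝ) : ℂ) *
          ((starRingEnd ℂ) (Tho αo βo) - (starRingEnd ℂ) (Thi αi βi))) := by
  have hR0 : (0:ℝ) < R := lt_of_lt_of_le two_pos hR
  have hx0 : (0:ℝ) < R ^ (2*n) := zpow_pos hR0 _
  have hx1 : (R:ℝ) ^ (2*n) ≤ 1 := zpow_le_one_of_nonpos₀ (le_trans one_le_two hR) (by omega)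
  have hsign : n.sign = -1 := Int.sign_eq_neg_one_iff_neg.mpr (by omega)
  have hS : Thi αi βi ≠ 0 := by
    simp [Thi, Complex.ext_iff]
    intro h; exact absurd h (ne_of_gt hαi)
  have hT2 := T2_ne αo βo hαo hx0
  have hG := G_ne αi αo βi βo hαi hαo hx0 hx1
  have key : (1 : ℂ) - lseq αi αo βi βo R n =
      ((Tho αo βo + (starRingEnd ℂ) (Thi αi βi)) +
        ((R ^ (2*n) : ℝ) : ℂ) *
          ((starRingEnd ℂ) (Tho αo βo) - (starRingEnd ℂ) (Thi αi βi))) /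
      (Tho αo βo + ((R ^ (2*n) : ℝ) : ℂ) * (starRingEnd ℂ) (Tho αo βo)) := by
    rw [lseq, hsign]
    have hc1 : ((-1:ℤ) : ℂ) * (αi : ℂ) - (βi : ℂ) * Complex.I = -(Thi αi βi) := by
      simp [Thi, Complex.ext_iff]
    rw [hc1, Complex.ofReal_mul, Complex.ofReal_sub, Complex.ofReal_one,
      Complex.ofReal_pow, habs']
    generalize hg : ((R ^ (2*n) : ℝ) : ℂ) = X at *
    field_simp
    ring
  rw [key, inv_div]

lemma mobius_diff (a b c d : ℂ) (x y : ℝ)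
    (hx : c + (x:ℂ) * d ≠ 0) (hy : c + (y:ℂ) * d ≠ 0) :
    (a + (y:ℂ) * b) / (c + (y:ℂ) * d) - (a + (x:ℂ) * b) / (c + (x:ℂ) * d)
      = ((b * c - a * d) * ((y:ℂ) - (x:ℂ))) / ((c + (y:ℂ) * d) * (c + (x:ℂ) * d)) := by
  rw [div_sub_div _ _ hy hx]
  ring

lemma abs_sub_le' (a b : ℂ) : ‖a - b‖ ≤ ‖a‖ + ‖b‖ := by
  simpa [sub_eq_add_neg] using norm_add_le a (-b)

-- lower bounds for denominators
lemma F_abs_ge (αi αo βi βo : ℝ) (hαi : 0 < αi) (hαo : 0 < αo) {x : ℝ} (hx1 : 1 ≤ x) :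
    αo * x ≤ ‖(Tho αo βo - Thi αi βi) + (x:ℂ) * ((starRingEnd ℂ) (Tho αo βo) + Thi αi βi)‖ := by
  have hre : ((Tho αo βo - Thi αi βi) +
      (x:ℂ) * ((starRingEnd ℂ) (Tho αo βo) + Thi αi βi)).re
      = αo * (1 + x) + αi * (x - 1) := by
    simp [Tho, Thi]; ring
  calc αo * x ≤ αo * (1 + x) + αi * (x - 1) := by nlinarith
    _ ≤ _ := by rw [← hre]; exact Complex.re_le_norm _

lemma G_abs_ge (αi αo βi βo : ℝ) (hαi : 0 < αi) (hαo : 0 < αo) {x : ℝ} (hx0 : 0 < x)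
    (hx1 : x ≤ 1) :
    αo ≤ ‖(Tho αo βo + (starRingEnd ℂ) (Thi αi βi)) +
      (x:ℂ) * ((starRingEnd ℂ) (Tho αo βo) - (starRingEnd ℂ) (Thi αi βi))‖ := by
  have hre : ((Tho αo βo + (starRingEnd ℂ) (Thi αi βi)) +
      (x:ℂ) * ((starRingEnd ℂ) (Tho αo βo) - (starRingEnd ℂ) (Thi αi βi))).re
      = αo * (1 + x) + αi * (1 - x) := by
    simp [Tho, Thi]; ring
  calc αo ≤ αo * (1 + x) + αi * (1 - x) := by nlinarith
    _ ≤ _ := by rw [← hre]; exact Complex.re_le_norm _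

lemma pos_diff_bound (αi αo βi βo R : ℝ) (hαi : 0 < αi) (hαo : 0 < αo) (hβi : 0 ≤ βi)
    (hR : 2 ≤ R) {n : ℤ} (hn : 1 ≤ n) :
    ‖(1 - lseq αi αo βi βo R (n+1))⁻¹ - (1 - lseq αi αo βi βo R n)⁻¹‖
      ≤ (2 * ‖Thi αi βi‖ * R^2 / αo) * ((R:ℝ) ^ (2*n))⁻¹ := by
  have hR0 : (0:ℝ) < R := lt_of_lt_of_le two_pos hR
  have hR1 : (1:ℝ) ≤ R := le_trans one_le_two hR
  have hx0 : (0:ℝ) < R ^ (2*n) := zpow_pos hR0 _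
  have hx1 : (1:ℝ) ≤ R ^ (2*n) := one_le_zpow₀ hR1 (by omega)
  have hy0 : (0:ℝ) < R ^ (2*(n+1)) := zpow_pos hR0 _
  have hy1 : (1:ℝ) ≤ R ^ (2*(n+1)) := one_le_zpow₀ hR1 (by omega)
  have hyx : (R:ℝ) ^ (2*(n+1)) = R ^ (2*n) * R^2 := by
    rw [show 2*(n+1) = 2*n + 2 by ring, zpow_add₀ (ne_of_gt hR0)]
    congr 1
  rw [Minv_pos αi αo βi βo R hαi hαo hβi hR hn,
    Minv_pos αi αo βi βo R hαi hαo hβi hR (by omega : (1:ℤ) ≤ n+1),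
    mobius_diff _ _ _ _ _ _ (F_ne αi αo βi βo hαi hαo hx1) (F_ne αi αo βi βo hαi hαo hy1),
    norm_div, norm_mul, norm_mul]
  have hR2 : (4:ℝ) ≤ R^2 := by nlinarith
  have hnum1 : (starRingEnd ℂ) (Tho αo βo) * (Tho αo βo - Thi αi βi)
      - Tho αo βo * ((starRingEnd ℂ) (Tho αo βo) + Thi αi βi)
      = ((-(2*αo) : ℝ) : ℂ) * Thi αi βi := by
    apply Complex.ext <;> simp [Tho, Thi] <;> ring
  have habs1 : ‖((-(2*αo) : ℝ) : ℂ) * Thi αi βi‖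
      = 2 * αo * ‖Thi αi βi‖ := by
    rw [norm_mul, Complex.norm_real, Real.norm_eq_abs, abs_neg, abs_of_pos (by positivity)]
  have habs2 : ‖((R ^ (2*(n+1)) : ℝ) : ℂ) - ((R ^ (2*n) : ℝ) : ℂ)‖
      = R ^ (2*(n+1)) - R ^ (2*n) := by
    rw [← Complex.ofReal_sub, Complex.norm_real, Real.norm_eq_abs, _root_.abs_of_nonneg]
    rw [hyx]; nlinarith [mul_le_mul_of_nonneg_left hR2 hx0.le]
  rw [hnum1, habs1, habs2]
  have hA := F_abs_ge αi αo βi βo hαi hαo hy1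
  have hB := F_abs_ge αi αo βi βo hαi hαo hx1
  have hden : αo * (R ^ (2*n)) * (αo * (R ^ (2*n)))
      ≤ ‖(Tho αo βo - Thi αi βi) +
            ((R ^ (2*(n+1)) : ℝ) : ℂ) * ((starRingEnd ℂ) (Tho αo βo) + Thi αi βi)‖
        * ‖(Tho αo βo - Thi αi βi) +
            ((R ^ (2*n) : ℝ) : ℂ) * ((starRingEnd ℂ) (Tho αo βo) + Thi αi βi)‖ := by
    have hA' : αo * (R ^ (2*n)) ≤ αo * (R ^ (2*(n+1))) := by
      rw [hyx]; nlinarith [mul_le_mul_of_nonneg_left hR2 hx0.le, mul_pos hαo hx0]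
    exact mul_le_mul (le_trans hA' hA) hB (by positivity) (by positivity)
  calc 2 * αo * ‖Thi αi βi‖ * ((R:ℝ) ^ (2*(n+1)) - R ^ (2*n)) /
        (‖_‖ * ‖_‖)
      ≤ 2 * αo * ‖Thi αi βi‖ * (R ^ (2*n) * R^2) /
        (αo * (R ^ (2*n)) * (αo * (R ^ (2*n)))) := by
        apply div_le_div₀ (by positivity) _ (by positivity) hden
        have hnn : (0:ℝ) ≤ 2 * αo * ‖Thi αi βi‖ := by positivity
        rw [hyx]
        nlinarith [mul_nonneg hnn hx0.le]
    _ = (2 * ‖Thi αi βi‖ * R^2 / αo) * ((R:ℝ) ^ (2*n))⁻¹ := by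
        field_simp

lemma neg_diff_bound (αi αo βi βo R : ℝ) (hαi : 0 < αi) (hαo : 0 < αo) (hβi : 0 ≤ βi)
    (hR : 2 ≤ R) {n : ℤ} (hn : n ≤ -2) :
    ‖(1 - lseq αi αo βi βo R (n+1))⁻¹ - (1 - lseq αi αo βi βo R n)⁻¹‖
      ≤ (2 * ‖Thi αi βi‖ * R^2 / αo) * (R:ℝ) ^ (2*n) := by
  have hR0 : (0:ℝ) < R := lt_of_lt_of_le two_pos hR
  have hR1 : (1:ℝ) ≤ R := le_trans one_le_two hR
  have hR2 : (4:ℝ) ≤ R^2 := by nlinarith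
  have hx0 : (0:ℝ) < R ^ (2*n) := zpow_pos hR0 _
  have hx1 : (R:ℝ) ^ (2*n) ≤ 1 := zpow_le_one_of_nonpos₀ hR1 (by omega)
  have hy0 : (0:ℝ) < R ^ (2*(n+1)) := zpow_pos hR0 _
  have hy1 : (R:ℝ) ^ (2*(n+1)) ≤ 1 := zpow_le_one_of_nonpos₀ hR1 (by omega)
  have hyx : (R:ℝ) ^ (2*(n+1)) = R ^ (2*n) * R^2 := by
    rw [show 2*(n+1) = 2*n + 2 by ring, zpow_add₀ (ne_of_gt hR0)]
    congr 1
  rw [Minv_neg αi αo βi βo R hαi hαo hβi hR (by omega : n ≤ -1),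
    Minv_neg αi αo βi βo R hαi hαo hβi hR (by omega : n + 1 ≤ -1),
    mobius_diff _ _ _ _ _ _ (G_ne αi αo βi βo hαi hαo hx0 hx1)
      (G_ne αi αo βi βo hαi hαo hy0 hy1),
    norm_div, norm_mul, norm_mul]
  have hnum1 : (starRingEnd ℂ) (Tho αo βo) * (Tho αo βo + (starRingEnd ℂ) (Thi αi βi))
      - Tho αo βo * ((starRingEnd ℂ) (Tho αo βo) - (starRingEnd ℂ) (Thi αi βi))
      = ((2*αo : ℝ) : ℂ) * (starRingEnd ℂ) (Thi αi βi) := by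
    apply Complex.ext <;> simp [Tho, Thi] <;> ring
  have habs1 : ‖((2*αo : ℝ) : ℂ) * (starRingEnd ℂ) (Thi αi βi)‖
      = 2 * αo * ‖Thi αi βi‖ := by
    rw [norm_mul, Complex.norm_real, Real.norm_eq_abs, Complex.norm_conj, abs_of_pos (by positivity)]
  have habs2 : ‖((R ^ (2*(n+1)) : ℝ) : ℂ) - ((R ^ (2*n) : ℝ) : ℂ)‖
      = R ^ (2*(n+1)) - R ^ (2*n) := by
    rw [← Complex.ofReal_sub, Complex.norm_real, Real.norm_eq_abs, _root_.abs_of_nonneg]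
    rw [hyx]; nlinarith [mul_le_mul_of_nonneg_left hR2 hx0.le]
  rw [hnum1, habs1, habs2]
  have hA := G_abs_ge αi αo βi βo hαi hαo hy0 hy1
  have hB := G_abs_ge αi αo βi βo hαi hαo hx0 hx1
  have hden : αo * αo
      ≤ ‖(Tho αo βo + (starRingEnd ℂ) (Thi αi βi)) +
            ((R ^ (2*(n+1)) : ℝ) : ℂ) *
              ((starRingEnd ℂ) (Tho αo βo) - (starRingEnd ℂ) (Thi αi βi))‖
        * ‖(Tho αo βo + (starRingEnd ℂ) (Thi αi βi)) +
            ((R ^ (2*n) : ℝ) : ℂ) *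
              ((starRingEnd ℂ) (Tho αo βo) - (starRingEnd ℂ) (Thi αi βi))‖ :=
    mul_le_mul hA hB hαo.le (by positivity)
  calc 2 * αo * ‖Thi αi βi‖ * ((R:ℝ) ^ (2*(n+1)) - R ^ (2*n)) /
        (‖_‖ * ‖_‖)
      ≤ 2 * αo * ‖Thi αi βi‖ * (R ^ (2*n) * R^2) / (αo * αo) := by
        apply div_le_div₀ (by positivity) _ (by positivity) hden
        have hnn : (0:ℝ) ≤ 2 * αo * ‖Thi αi βi‖ := by positivity
        rw [hyx]
        nlinarith [mul_nonneg hnn hx0.le]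
    _ = (2 * ‖Thi αi βi‖ * R^2 / αo) * (R:ℝ) ^ (2*n) := by
        field_simp

lemma sq_le_pow4 (k : ℕ) : ((k:ℝ))^2 ≤ 4^k := by
  induction k with
  | zero => norm_num
  | succ k ih =>
    rcases Nat.eq_zero_or_pos k with rfl | hk
    · norm_num
    · have hk1 : (1:ℝ) ≤ (k:ℝ) := by exact_mod_cast hk
      push_cast
      push_cast at ih
      nlinarith [pow_succ (4:ℝ) k]

lemma grow (R : ℝ) (hR : 2 ≤ R) {n : ℤ} (hn : 1 ≤ n) : ((n:ℝ))^2 ≤ R ^ (2*n) := by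
  lift n to ℕ using (by omega)
  have h4 : ((n:ℕ):ℝ)^2 ≤ 4^(n:ℕ) := sq_le_pow4 n
  have h5 : (4:ℝ)^(n:ℕ) ≤ (R^2)^(n:ℕ) := pow_le_pow_left₀ (by norm_num) (by nlinarith) n
  have hz : (R:ℝ) ^ (2*(n:ℤ)) = (R^2)^(n:ℕ) := by
    rw [show (2*(n:ℤ)) = ((2*n : ℕ):ℤ) by push_cast; ring, zpow_natCast, pow_mul]
  rw [hz]
  push_cast
  push_cast at h4
  linarith

/-- With `M_n := (1 − l_n)⁻¹`, the first and second discrete differences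
satisfy `sup |n|·|M_{n+1} − M_n| < ∞` (over `n` with `n ≠ 0`, `n+1 ≠ 0`) and
`sup |n|²·|M_{n+2} − 2M_{n+1} + M_n| < ∞` (over `n` with `n, n+1, n+2 ≠ 0`). -/
theorem statement6 (αi αo βi βo R : ℝ)
    (hαi : 0 < αi) (hαo : 0 < αo) (hβi : 0 ≤ βi) (hβo : 0 ≤ βo) (hR : 2 ≤ R) :
    (∃ C : ℝ, ∀ n : ℤ, n ≠ 0 → n + 1 ≠ 0 →
      (|n| : ℝ) * ‖((1 - lseq αi αo βi βo R (n + 1))⁻¹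
        - (1 - lseq αi αo βi βo R n)⁻¹)‖ ≤ C)
    ∧ ∃ C : ℝ, ∀ n : ℤ, n ≠ 0 → n + 1 ≠ 0 → n + 2 ≠ 0 →
      (|n| : ℝ) ^ 2 * ‖((1 - lseq αi αo βi βo R (n + 2))⁻¹
        - 2 * (1 - lseq αi αo βi βo R (n + 1))⁻¹
        + (1 - lseq αi αo βi βo R n)⁻¹)‖ ≤ C := by
  have hR0 : (0:ℝ) < R := lt_of_lt_of_le two_pos hR
  have hR1 : (1:ℝ) ≤ R := le_trans one_le_two hR
  have hR2 : (4:ℝ) ≤ R^2 := by nlinarith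
  set K : ℝ := 2 * ‖Thi αi βi‖ * R^2 / αo with hKdef
  have hK0 : 0 ≤ K := by positivity
  constructor
  · refine ⟨K, fun n hn0 hn1 => ?_⟩
    have hx0 : (0:ℝ) < R ^ (2*n) := zpow_pos hR0 _
    rcases (by omega : 1 ≤ n ∨ n ≤ -2) with h1 | h2
    · have hb := pos_diff_bound αi αo βi βo R hαi hαo hβi hR h1
      have hnabs : |(n:ℝ)| = (n:ℝ) := by
        rw [_root_.abs_of_pos (by exact_mod_cast (by omega : (0:ℤ) < n) : (0:ℝ) < (n:ℝ))]
      have hn1' : (1:ℝ) ≤ (n:ℝ) := by exact_mod_cast h1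
      have hgr : ((n:ℝ))^2 ≤ R ^ (2*n) := grow R hR h1
      have hnx : (n:ℝ) ≤ R ^ (2*n) := by nlinarith
      have h1x : (n:ℝ) * (R ^ (2*n))⁻¹ ≤ 1 := by
        rw [← div_eq_mul_inv]; exact (div_le_one hx0).mpr hnx
      calc |(n:ℝ)| * ‖_‖
          = (n:ℝ) * ‖_‖ := by rw [hnabs]
        _ ≤ (n:ℝ) * (K * (R ^ (2*n))⁻¹) :=
            mul_le_mul_of_nonneg_left hb (by positivity)
        _ = K * ((n:ℝ) * (R ^ (2*n))⁻¹) := by ring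
        _ ≤ K * 1 := mul_le_mul_of_nonneg_left h1x hK0
        _ = K := mul_one K
    · have hb := neg_diff_bound αi αo βi βo R hαi hαo hβi hR h2
      have hnabs : |(n:ℝ)| = -(n:ℝ) := by
        rw [_root_.abs_of_neg (by exact_mod_cast (by omega : n < 0) : (n:ℝ) < 0)]
      have hM2 : (2:ℝ) ≤ -(n:ℝ) := by
        have : (n:ℝ) ≤ -2 := by exact_mod_cast h2
        linarith
      have hgr : ((-(n:ℝ)))^2 ≤ R ^ (2*(-n)) := by
        have := grow R hR (by omega : 1 ≤ -n)
        push_cast at this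
        nlinarith [this]
      have hzneg : (R:ℝ) ^ (2*(-n)) = (R ^ (2*n))⁻¹ := by
        rw [show 2*(-n) = -(2*n) by ring, zpow_neg]
      rw [hzneg] at hgr
      have hm2x : (-(n:ℝ))^2 * R ^ (2*n) ≤ 1 := by
        have := mul_le_mul_of_nonneg_right hgr hx0.le
        rwa [inv_mul_cancel₀ (ne_of_gt hx0)] at this
      have hmx : -(n:ℝ) * R ^ (2*n) ≤ 1 := by nlinarith
      calc |(n:ℝ)| * ‖_‖
          = -(n:ℝ) * ‖_‖ := by rw [hnabs]
        _ ≤ -(n:ℝ) * (K * R ^ (2*n)) :=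
            mul_le_mul_of_nonneg_left hb (by linarith)
        _ = K * (-(n:ℝ) * R ^ (2*n)) := by ring
        _ ≤ K * 1 := mul_le_mul_of_nonneg_left hmx hK0
        _ = K := mul_one K
  · refine ⟨8 * K, fun n hn0 hn1 hn2 => ?_⟩
    have hx0 : (0:ℝ) < R ^ (2*n) := zpow_pos hR0 _
    have hy0 : (0:ℝ) < R ^ (2*(n+1)) := zpow_pos hR0 _
    have hyx : (R:ℝ) ^ (2*(n+1)) = R ^ (2*n) * R^2 := by
      rw [show 2*(n+1) = 2*n + 2 by ring, zpow_add₀ (ne_of_gt hR0)]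
      congr 1
    have hsplit : ‖(1 - lseq αi αo βi βo R (n + 2))⁻¹
        - 2 * (1 - lseq αi αo βi βo R (n + 1))⁻¹ + (1 - lseq αi αo βi βo R n)⁻¹‖
        ≤ ‖(1 - lseq αi αo βi βo R (n + 1 + 1))⁻¹
            - (1 - lseq αi αo βi βo R (n + 1))⁻¹‖
          + ‖(1 - lseq αi αo βi βo R (n + 1))⁻¹
            - (1 - lseq αi αo βi βo R n)⁻¹‖ := by
      rw [show n + 1 + 1 = n + 2 by ring]
      have : (1 - lseq αi αo βi βo R (n + 2))⁻¹
          - 2 * (1 - lseq αi αo βi βo R (n + 1))⁻¹ + (1 - lseq αi αo βi βo R n)⁻¹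
          = ((1 - lseq αi αo βi βo R (n + 2))⁻¹ - (1 - lseq αi αo βi βo R (n + 1))⁻¹)
            - ((1 - lseq αi αo βi βo R (n + 1))⁻¹ - (1 - lseq αi αo βi βo R n)⁻¹) := by
        ring
      rw [this]
      exact abs_sub_le' _ _
    rcases (by omega : 1 ≤ n ∨ n ≤ -3) with h1 | h2
    · have hb1 := pos_diff_bound αi αo βi βo R hαi hαo hβi hR h1
      have hb2 := pos_diff_bound αi αo βi βo R hαi hαo hβi hR (by omega : (1:ℤ) ≤ n+1)
      have hinv : (R ^ (2*(n+1)) : ℝ)⁻¹ ≤ (R ^ (2*n))⁻¹ := by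
        apply inv_anti₀ hx0
        rw [hyx]; nlinarith
      have hb2' : ‖(1 - lseq αi αo βi βo R (n + 1 + 1))⁻¹
          - (1 - lseq αi αo βi βo R (n + 1))⁻¹‖ ≤ K * (R ^ (2*n))⁻¹ :=
        le_trans hb2 (mul_le_mul_of_nonneg_left hinv hK0)
      have hnabs : |(n:ℝ)| = (n:ℝ) := by
        rw [_root_.abs_of_pos (by exact_mod_cast (by omega : (0:ℤ) < n) : (0:ℝ) < (n:ℝ))]
      have hgr : ((n:ℝ))^2 ≤ R ^ (2*n) := grow R hR h1
      have h1x : ((n:ℝ))^2 * (R ^ (2*n))⁻¹ ≤ 1 := by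
        rw [← div_eq_mul_inv]; exact (div_le_one hx0).mpr hgr
      calc |(n:ℝ)|^2 * ‖_‖
          = ((n:ℝ))^2 * ‖_‖ := by rw [hnabs]
        _ ≤ ((n:ℝ))^2 * (K * (R ^ (2*n))⁻¹ + K * (R ^ (2*n))⁻¹) :=
            mul_le_mul_of_nonneg_left (le_trans hsplit (add_le_add hb2' hb1))
              (by positivity)
        _ = (2*K) * ((n:ℝ)^2 * (R ^ (2*n))⁻¹) := by ring
        _ ≤ (2*K) * 1 := mul_le_mul_of_nonneg_left h1x (by positivity)
        _ ≤ 8 * K := by nlinarith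
    · have hb1 := neg_diff_bound αi αo βi βo R hαi hαo hβi hR (by omega : n ≤ -2)
      have hb2 := neg_diff_bound αi αo βi βo R hαi hαo hβi hR (by omega : n + 1 ≤ -2)
      have hxy : (R:ℝ) ^ (2*n) ≤ R ^ (2*(n+1)) := by
        rw [hyx]; nlinarith
      have hb1' : ‖(1 - lseq αi αo βi βo R (n + 1))⁻¹
          - (1 - lseq αi αo βi βo R n)⁻¹‖ ≤ K * R ^ (2*(n+1)) :=
        le_trans hb1 (mul_le_mul_of_nonneg_left hxy hK0)
      have hnabs : |(n:ℝ)| = -(n:ℝ) := by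
        rw [_root_.abs_of_neg (by exact_mod_cast (by omega : n < 0) : (n:ℝ) < 0)]
      -- growth at -(n+1) = -n-1 ≥ 2
      have hgr : ((-(n:ℝ) - 1))^2 ≤ R ^ (2*(-(n+1))) := by
        have := grow R hR (by omega : 1 ≤ -(n+1))
        push_cast at this
        nlinarith [this]
      have hzneg : (R:ℝ) ^ (2*(-(n+1))) = (R ^ (2*(n+1)))⁻¹ := by
        rw [show 2*(-(n+1)) = -(2*(n+1)) by ring, zpow_neg]
      rw [hzneg] at hgr
      have hm2y : ((-(n:ℝ) - 1))^2 * R ^ (2*(n+1)) ≤ 1 := by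
        have := mul_le_mul_of_nonneg_right hgr hy0.le
        rwa [inv_mul_cancel₀ (ne_of_gt hy0)] at this
      have hM3 : (3:ℝ) ≤ -(n:ℝ) := by
        have : (n:ℝ) ≤ -3 := by exact_mod_cast h2
        linarith
      have hsq : ((-(n:ℝ)))^2 ≤ 4 * ((-(n:ℝ) - 1))^2 := by nlinarith
      have hm2y' : ((-(n:ℝ)))^2 * R ^ (2*(n+1)) ≤ 4 := by
        have h' := mul_le_mul_of_nonneg_right hsq hy0.le
        linarith
      calc |(n:ℝ)|^2 * ‖_‖
          = ((-(n:ℝ)))^2 * ‖_‖ := by rw [hnabs]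
        _ ≤ ((-(n:ℝ)))^2 * (K * R ^ (2*(n+1)) + K * R ^ (2*(n+1))) :=
            mul_le_mul_of_nonneg_left (le_trans hsplit (add_le_add hb2 hb1'))
              (by positivity)
        _ = (2*K) * ((-(n:ℝ))^2 * R ^ (2*(n+1))) := by ring
        _ ≤ (2*K) * 4 := mul_le_mul_of_nonneg_left hm2y' (by positivity)
        _ = 8 * K := by ring
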